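/- Let g : ℤ → ℝ with g_i ≥ 0 for all i, and let x, y : ℤ → ℝ. Assume that the following families indexed by i ∈ ℤ are summable: (e^{x_i − y_i}), (g_i e^{y_{i+1} − x_i}), (g_i e^{x_{i+1} − x_i}), (g_i e^{y_{i+1} − y_i}), (e^{2(x_i − y_i)}), and (g_i² e^{2(y_{i+1} − x_i)}). Then Σ_{i∈ℤ} [ ( e^{x_i − y_i} − g_i e^{y_{i+1} − x_i} )² + e^{x_i − y_i} + g_i e^{y_{i+1} − x_i} ] − 2 Σ_{i∈ℤ} g_i e^{x_{i+1} − x_i} = Σ_{i∈ℤ} [ ( e^{x_i − y_i} − g_{i−1} e^{y_i − x_{i−1}} )² + e^{x_i − y_i} + g_{i−1} e^{y_i − x_{i−1}} ] − 2 Σ_{i∈ℤ} g_i e^{y_{i+1} − y_i} (all sums are tsums over ℤ). This identity expresses that the Baxter kernel Q(x,y) = exp( Σ_{i∈ℤ} ( e^{x_i − y_i} + g_i e^{y_{i+1} − x_i} ) ) of the A_∞ Toda chain satisfies H(x)Q = H(y)Q, where H is the A_∞ Toda Hamiltonian −(1/2) Σ_{i∈ℤ} ∂²/∂u_i² + Σ_{i∈ℤ}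 g_i e^{u_{i+1} − u_i}: dividing H(x)Q − H(y)Q by Q and multiplying by −2 yields exactly the displayed identity, since ∂F/∂x_i = e^{x_i − y_i} − g_i e^{y_{i+1} − x_i} and ∂F/∂y_i = −e^{x_i − y_i} + g_{i−1} e^{y_i − x_{i−1}} for F the exponent of Q. -/

import Mathlib

open Real

/-- The `A_∞` Toda chain intertwining identity for the Baxter kernel
`Q(x,y) = exp( Σ_{i∈ℤ} ( e^{x_i − y_i} + g_i e^{y_{i+1} − x_i} ) )`:
dividing `H(x)Q − H(y)Q` by `Q` and multiplying by `−2` yields the displayed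
identity between convergent series. -/
theorem Ainf_baxter_intertwining (g x y : ℤ → ℝ) (hg : ∀ i, 0 ≤ g i)
    (h1 : Summable fun i : ℤ => Real.exp (x i - y i))
    (h2 : Summable fun i : ℤ => g i * Real.exp (y (i + 1) - x i))
    (h3 : Summable fun i : ℤ => g i * Real.exp (x (i + 1) - x i))
    (h4 : Summable fun i : ℤ => g i * Real.exp (y (i + 1) - y i))
    (h5 : Summable fun i : ℤ => Real.exp (2 * (x i - y i)))
    (h6 : Summable fun i : ℤ => (g i) ^ 2 * Real.exp (2 * (y (i + 1) - x i))) :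
    (∑' i : ℤ, ((Real.exp (x i - y i) - g i * Real.exp (y (i + 1) - x i)) ^ 2
        + Real.exp (x i - y i) + g i * Real.exp (y (i + 1) - x i)))
      - 2 * ∑' i : ℤ, g i * Real.exp (x (i + 1) - x i)
    = (∑' i : ℤ, ((Real.exp (x i - y i) - g (i - 1) * Real.exp (y i - x (i - 1))) ^ 2
        + Real.exp (x i - y i) + g (i - 1) * Real.exp (y i - x (i - 1))))
      - 2 * ∑' i : ℤ, g i * Real.exp (y (i + 1) - y i) := by
  -- shift lemmas
  have shiftsum : ∀ f : ℤ → ℝ, (∑' i : ℤ, f (i - 1)) = ∑' i : ℤ, f i := by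
    intro f
    exact (Equiv.subRight (1 : ℤ)).tsum_eq f
  have shiftsummable : ∀ f : ℤ → ℝ, Summable f → Summable (fun i : ℤ => f (i - 1)) := by
    intro f hf
    have := ((Equiv.subRight (1 : ℤ)).summable_iff (f := f)).mpr hf
    exact this
  -- termwise expansions
  have expand1 : ∀ i : ℤ,
      (Real.exp (x i - y i) - g i * Real.exp (y (i + 1) - x i)) ^ 2
        + Real.exp (x i - y i) + g i * Real.exp (y (i + 1) - x i)
      = Real.exp (2 * (x i - y i)) + (g i) ^ 2 * Real.exp (2 * (y (i + 1) - x i))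
        + Real.exp (x i - y i) + g i * Real.exp (y (i + 1) - x i)
        - 2 * (g i * Real.exp (y (i + 1) - y i)) := by
    intro i
    have e1 : Real.exp (2 * (x i - y i))
        = Real.exp (x i - y i) * Real.exp (x i - y i) := by
      rw [← Real.exp_add]; ring_nf
    have e2 : Real.exp (2 * (y (i + 1) - x i))
        = Real.exp (y (i + 1) - x i) * Real.exp (y (i + 1) - x i) := by
      rw [← Real.exp_add]; ring_nf
    have e3 : Real.exp (y (i + 1) - y i)
        = Real.exp (x i - y i) * Real.exp (y (i + 1) - x i) := by
      rw [← Real.exp_add]; ring_nf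
    rw [e1, e2, e3]; ring
  have expand2 : ∀ i : ℤ,
      (Real.exp (x i - y i) - g (i - 1) * Real.exp (y i - x (i - 1))) ^ 2
        + Real.exp (x i - y i) + g (i - 1) * Real.exp (y i - x (i - 1))
      = Real.exp (2 * (x i - y i)) + (g (i - 1)) ^ 2 * Real.exp (2 * (y i - x (i - 1)))
        + Real.exp (x i - y i) + g (i - 1) * Real.exp (y i - x (i - 1))
        - 2 * (g (i - 1) * Real.exp (x i - x (i - 1))) := by
    intro i
    have e1 : Real.exp (2 * (x i - y i))
        = Real.exp (x i - y i) * Real.exp (x i - y i) := by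
      rw [← Real.exp_add]; ring_nf
    have e2 : Real.exp (2 * (y i - x (i - 1)))
        = Real.exp (y i - x (i - 1)) * Real.exp (y i - x (i - 1)) := by
      rw [← Real.exp_add]; ring_nf
    have e3 : Real.exp (x i - x (i - 1))
        = Real.exp (x i - y i) * Real.exp (y i - x (i - 1)) := by
      rw [← Real.exp_add]; ring_nf
    rw [e1, e2, e3]; ring
  -- shifted summable families (for the RHS)
  have h6' : Summable (fun i : ℤ => (g (i - 1)) ^ 2 * Real.exp (2 * (y i - x (i - 1)))) := by
    have := shiftsummable _ h6
    simpa using this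
  have h2' : Summable (fun i : ℤ => g (i - 1) * Real.exp (y i - x (i - 1))) := by
    have := shiftsummable _ h2
    simpa using this
  have h3' : Summable (fun i : ℤ => g (i - 1) * Real.exp (x i - x (i - 1))) := by
    have := shiftsummable _ h3
    simpa using this
  -- values of shifted tsums
  have s6 : (∑' i : ℤ, (g (i - 1)) ^ 2 * Real.exp (2 * (y i - x (i - 1))))
      = ∑' i : ℤ, (g i) ^ 2 * Real.exp (2 * (y (i + 1) - x i)) := by
    have := shiftsum (fun i : ℤ => (g i) ^ 2 * Real.exp (2 * (y (i + 1) - x i)))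
    simpa using this
  have s2 : (∑' i : ℤ, g (i - 1) * Real.exp (y i - x (i - 1)))
      = ∑' i : ℤ, g i * Real.exp (y (i + 1) - x i) := by
    have := shiftsum (fun i : ℤ => g i * Real.exp (y (i + 1) - x i))
    simpa using this
  have s3 : (∑' i : ℤ, g (i - 1) * Real.exp (x i - x (i - 1)))
      = ∑' i : ℤ, g i * Real.exp (x (i + 1) - x i) := by
    have := shiftsum (fun i : ℤ => g i * Real.exp (x (i + 1) - x i))
    simpa using this
  -- split the LHS tsum
  have hsumL : Summable (fun i : ℤ =>
      Real.exp (2 * (x i - y i)) + (g i) ^ 2 * Real.exp (2 * (y (i + 1) - x i))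
        + Real.exp (x i - y i) + g i * Real.exp (y (i + 1) - x i)) :=
    ((h5.add h6).add h1).add h2
  have tL : (∑' i : ℤ, ((Real.exp (x i - y i) - g i * Real.exp (y (i + 1) - x i)) ^ 2
        + Real.exp (x i - y i) + g i * Real.exp (y (i + 1) - x i)))
      = (∑' i : ℤ, Real.exp (2 * (x i - y i)))
        + (∑' i : ℤ, (g i) ^ 2 * Real.exp (2 * (y (i + 1) - x i)))
        + (∑' i : ℤ, Real.exp (x i - y i))
        + (∑' i : ℤ, g i * Real.exp (y (i + 1) - x i))
        - 2 * (∑' i : ℤ, g i * Real.exp (y (i + 1) - y i)) := by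
    calc (∑' i : ℤ, ((Real.exp (x i - y i) - g i * Real.exp (y (i + 1) - x i)) ^ 2
        + Real.exp (x i - y i) + g i * Real.exp (y (i + 1) - x i)))
        = ∑' i : ℤ, ((Real.exp (2 * (x i - y i)) + (g i) ^ 2 * Real.exp (2 * (y (i + 1) - x i))
            + Real.exp (x i - y i) + g i * Real.exp (y (i + 1) - x i))
            - 2 * (g i * Real.exp (y (i + 1) - y i))) := by
          exact tsum_congr expand1
      _ = (∑' i : ℤ, (Real.exp (2 * (x i - y i)) + (g i) ^ 2 * Real.exp (2 * (y (i + 1) - x i))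
            + Real.exp (x i - y i) + g i * Real.exp (y (i + 1) - x i)))
          - ∑' i : ℤ, 2 * (g i * Real.exp (y (i + 1) - y i)) :=
          Summable.tsum_sub hsumL (h4.mul_left 2)
      _ = (∑' i : ℤ, Real.exp (2 * (x i - y i)))
            + (∑' i : ℤ, (g i) ^ 2 * Real.exp (2 * (y (i + 1) - x i)))
            + (∑' i : ℤ, Real.exp (x i - y i))
            + (∑' i : ℤ, g i * Real.exp (y (i + 1) - x i))
            - 2 * (∑' i : ℤ, g i * Real.exp (y (i + 1) - y i)) := by
          rw [Summable.tsum_add ((h5.add h6).add h1) h2, Summable.tsum_add (h5.add h6) h1, Summable.tsum_add h5 h6,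
            tsum_mul_left]
  -- split the RHS tsum
  have hsumR : Summable (fun i : ℤ =>
      Real.exp (2 * (x i - y i)) + (g (i - 1)) ^ 2 * Real.exp (2 * (y i - x (i - 1)))
        + Real.exp (x i - y i) + g (i - 1) * Real.exp (y i - x (i - 1))) :=
    ((h5.add h6').add h1).add h2'
  have tR : (∑' i : ℤ, ((Real.exp (x i - y i) - g (i - 1) * Real.exp (y i - x (i - 1))) ^ 2
        + Real.exp (x i - y i) + g (i - 1) * Real.exp (y i - x (i - 1))))
      = (∑' i : ℤ, Real.exp (2 * (x i - y i)))
        + (∑' i : ℤ, (g i) ^ 2 * Real.exp (2 * (y (i + 1) - x i)))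
        + (∑' i : ℤ, Real.exp (x i - y i))
        + (∑' i : ℤ, g i * Real.exp (y (i + 1) - x i))
        - 2 * (∑' i : ℤ, g i * Real.exp (x (i + 1) - x i)) := by
    calc (∑' i : ℤ, ((Real.exp (x i - y i) - g (i - 1) * Real.exp (y i - x (i - 1))) ^ 2
        + Real.exp (x i - y i) + g (i - 1) * Real.exp (y i - x (i - 1))))
        = ∑' i : ℤ, ((Real.exp (2 * (x i - y i)) + (g (i - 1)) ^ 2 * Real.exp (2 * (y i - x (i - 1)))
            + Real.exp (x i - y i) + g (i - 1) * Real.exp (y i - x (i - 1)))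
            - 2 * (g (i - 1) * Real.exp (x i - x (i - 1)))) := by
          exact tsum_congr expand2
      _ = (∑' i : ℤ, (Real.exp (2 * (x i - y i)) + (g (i - 1)) ^ 2 * Real.exp (2 * (y i - x (i - 1)))
            + Real.exp (x i - y i) + g (i - 1) * Real.exp (y i - x (i - 1))))
          - ∑' i : ℤ, 2 * (g (i - 1) * Real.exp (x i - x (i - 1))) :=
          Summable.tsum_sub hsumR (h3'.mul_left 2)
      _ = (∑' i : ℤ, Real.exp (2 * (x i - y i)))
            + (∑' i : ℤ, (g (i - 1)) ^ 2 * Real.exp (2 * (y i - x (i - 1))))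
            + (∑' i : ℤ, Real.exp (x i - y i))
            + (∑' i : ℤ, g (i - 1) * Real.exp (y i - x (i - 1)))
            - 2 * (∑' i : ℤ, g (i - 1) * Real.exp (x i - x (i - 1))) := by
          rw [Summable.tsum_add ((h5.add h6').add h1) h2', Summable.tsum_add (h5.add h6') h1, Summable.tsum_add h5 h6',
            tsum_mul_left]
      _ = _ := by rw [s6, s2, s3]
  rw [tL, tR]
  ring
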